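/- Let h : S → ℕ be a bounded function defined on the rational regular points of the sphere of rays S of a finite-dimensional real vector space (where the regular points form a dense open subset and the rational points are dense in it), satisfying local maximality: every rational regular point b has the property that for some neighborhood U of b, h(a) ≤ h(b) for all rational regular a ∈ U. Then h extends to a function on all of S that is bounded and locally maximal. -/
import Mathlib

/-- Membership in the level sets is antitone in `n`. -/
lemma lme_aux {X : Type*} [TopologicalSpace X] (Q : Set X) (h : X → ℕ) {m n : ℕ}
    (hmn : m ≤ n) {z : X} (hz : z ∈ closure {a | a ∈ Q ∧ n ≤ h a}) :
    z ∈ closure {a | a ∈ Q ∧ m ≤ h a} := by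
  refine closure_mono ?_ hz
  intro a ha
  exact ⟨ha.1, hmn.trans ha.2⟩

/-- Let `S` be the sphere of rays of a finite-dimensional real vector
space (the unit sphere in `ℝʳ`), `R ⊆ S` a dense open subset (the regular points) and
`Q ⊆ R` a subset dense in `R` (the rational regular points).  Let `h` be a bounded
`ℕ`-valued function on `Q` that is locally maximal: every `b ∈ Q` has a neighborhood
`U` with `h a ≤ h b` for all rational regular `a ∈ U`.  Then `h` extends to a function
`H` on all of `S` that is bounded (by the same bound) and locally maximal. -/
theorem locally_maximal_extension
    (r : ℕ)
    (R Q : Set (Metric.sphere (0 : EuclideanSpace ℝ (Fin r)) 1))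
    (hRopen : IsOpen R) (hRdense : Dense R)
    (hQR : Q ⊆ R)
    (hQdense : ∀ x ∈ R, x ∈ closure Q)
    (N : ℕ)
    (h : Metric.sphere (0 : EuclideanSpace ℝ (Fin r)) 1 → ℕ)
    (hbound : ∀ x ∈ Q, h x ≤ N)
    (hlocmax : ∀ b ∈ Q, ∃ U ∈ nhds b, ∀ a ∈ Q ∩ U, h a ≤ h b) :
    ∃ H : Metric.sphere (0 : EuclideanSpace ℝ (Fin r)) 1 → ℕ,
      (∀ x ∈ Q, H x = h x) ∧
      (∀ x, H x ≤ N) ∧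
      (∀ z, ∃ U ∈ nhds z, ∀ a ∈ U, H a ≤ H z) := by
  classical
  -- `Q` is dense in the whole sphere.
  have hQdense' : ∀ z, z ∈ closure Q := by
    intro z
    have h1 : closure R ⊆ closure Q := by
      have : R ⊆ closure Q := fun x hx => hQdense x hx
      simpa using closure_minimal this isClosed_closure
    exact h1 (by simpa using hRdense z)
  -- the set of levels attained near `z`
  set S : Metric.sphere (0 : EuclideanSpace ℝ (Fin r)) 1 → Set ℕ :=
    fun z => {n | z ∈ closure {a | a ∈ Q ∧ n ≤ h a}} with hS
  have hS0 : ∀ z, 0 ∈ S z := by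
    intro z
    have : {a | a ∈ Q ∧ 0 ≤ h a} = Q := by ext a; simp
    simp only [hS, Set.mem_setOf_eq, this]
    exact hQdense' z
  have hSbdd : ∀ z, ∀ n ∈ S z, n ≤ N := by
    intro z n hn
    have hne : {a | a ∈ Q ∧ n ≤ h a}.Nonempty := by
      by_contra hemp
      rw [Set.not_nonempty_iff_eq_empty] at hemp
      simp only [hS, Set.mem_setOf_eq, hemp, closure_empty] at hn
      exact hn
    obtain ⟨a, haQ, hah⟩ := hne
    exact hah.trans (hbound a haQ)
  set H : Metric.sphere (0 : EuclideanSpace ℝ (Fin r)) 1 → ℕ :=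
    fun z => sSup (S z) with hH
  have hHmem : ∀ z, H z ∈ S z := by
    intro z
    exact Nat.sSup_mem ⟨0, hS0 z⟩ ⟨N, hSbdd z⟩
  have hHle : ∀ z n, n ∈ S z → n ≤ H z := by
    intro z n hn
    exact le_csSup ⟨N, hSbdd z⟩ hn
  refine ⟨H, ?_, ?_, ?_⟩
  · -- extension
    intro x hx
    have h1 : h x ∈ S x := by
      simp only [hS, Set.mem_setOf_eq]
      exact subset_closure ⟨hx, le_refl _⟩
    have h2 : h x ≤ H x := hHle x _ h1
    have h3 : H x ≤ h x := by
      by_contra hlt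
      push_neg at hlt
      -- `x ∈ closure {a ∈ Q | H x ≤ h a}` with `H x > h x`
      have hmem : x ∈ closure {a | a ∈ Q ∧ H x ≤ h a} := hHmem x
      obtain ⟨U, hU, hUmax⟩ := hlocmax x hx
      rw [mem_closure_iff_nhds] at hmem
      obtain ⟨a, haU, haQ, hah⟩ := hmem U hU
      have : h a ≤ h x := hUmax a ⟨haQ, haU⟩
      omega
    omega
  · -- boundedness
    intro x
    exact hSbdd x _ (hHmem x)
  · -- local maximality
    intro z
    have hnot : z ∉ closure {a | a ∈ Q ∧ H z + 1 ≤ h a} := by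
      intro hc
      have : H z + 1 ≤ H z := hHle z _ hc
      omega
    refine ⟨(closure {a | a ∈ Q ∧ H z + 1 ≤ h a})ᶜ, ?_, ?_⟩
    · exact isClosed_closure.isOpen_compl.mem_nhds hnot
    · intro a ha
      by_contra hlt
      push_neg at hlt
      have hmem : a ∈ closure {b | b ∈ Q ∧ H a ≤ h b} := hHmem a
      have : a ∈ closure {b | b ∈ Q ∧ H z + 1 ≤ h b} :=
        lme_aux Q h (by omega) hmem
      exact ha this
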